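/- arXiv:cs/0003021 — 2 statements merged into one kernel-verified Lean document; each statement's English description precedes it below -/
import Mathlib

section
/- For every propositional formula α there exists a unique smallest set of propositional variables expressing α; that is, the collection of sets of variables V such that α is logically equivalent to some formula whose variables all lie in V has a least element with respect to inclusion (equivalently, if V₁ and V₂ both express α then V₁ ∩ V₂ expresses α). -/
namespace BeliefSeq

/-- Propositional formulas over a type `ν` of propositional variables,
with connectives ¬, ∧, ∨, →, ↔ and constants true, false. -/
inductive PropForm (ν : Type) : Type where
  | var : ν → PropForm ν
  | tru : PropForm ν
  | fls : PropForm ν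
  | neg : PropForm ν → PropForm ν
  | conj : PropForm ν → PropForm ν → PropForm ν
  | disj : PropForm ν → PropForm ν → PropForm ν
  | impl : PropForm ν → PropForm ν → PropForm ν
  | biim : PropForm ν → PropForm ν → PropForm ν

namespace PropForm

variable {ν : Type}

/-- Classical (two-valued) evaluation of a formula under a valuation. -/
def eval (v : ν → Bool) : PropForm ν → Bool
  | var x => v x
  | tru => true
  | fls => false
  | neg φ => !(φ.eval v)
  | conj φ ψ => φ.eval v && ψ.eval v
  | disj φ ψ => φ.eval v || ψ.eval v
  | impl φ ψ => !(φ.eval v) || ψ.eval v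
  | biim φ ψ => φ.eval v == ψ.eval v

/-- The set `L(α)` of variables occurring syntactically in a formula. -/
def vars : PropForm ν → Set ν
  | var x => {x}
  | tru => ∅
  | fls => ∅
  | neg φ => φ.vars
  | conj φ ψ => φ.vars ∪ ψ.vars
  | disj φ ψ => φ.vars ∪ ψ.vars
  | impl φ ψ => φ.vars ∪ ψ.vars
  | biim φ ψ => φ.vars ∪ ψ.vars

end PropForm

variable {ν : Type}

/-- `α ⇔ β` : logical equivalence (α ↔ β is a tautology). -/
def Equiv (α β : PropForm ν) : Prop := ∀ v, α.eval v = β.eval v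

def Tautology (α : PropForm ν) : Prop := ∀ v, α.eval v = true

def Contradiction (α : PropForm ν) : Prop := ∀ v, α.eval v = false

/-- Classical consequence `Γ ⊢ γ`. -/
def Entails (Γ : Set (PropForm ν)) (γ : PropForm ν) : Prop :=
  ∀ v, (∀ φ ∈ Γ, φ.eval v = true) → γ.eval v = true

/-- Consistency (satisfiability) of a set of formulas. -/
def Satisfiable (Γ : Set (PropForm ν)) : Prop :=
  ∃ v, ∀ φ ∈ Γ, φ.eval v = true

/-- `V` expresses `α`: α is logically equivalent to some formula
all of whose variables lie in `V`. -/
def Expresses (V : Set ν) (α : PropForm ν) : Prop :=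
  ∃ β : PropForm ν, Equiv α β ∧ β.vars ⊆ V

/-- `L_α` : the smallest language of `α` (intersection of all sets of
variables expressing `α`). -/
def Lang (α : PropForm ν) : Set ν := ⋂₀ {V : Set ν | Expresses V α}

/-- Direct relevance (`0`-relevance): logical language overlap `L_α ∩ L_β ≠ ∅`. -/
def DirectRel (α β : PropForm ν) : Prop := (Lang α ∩ Lang β).Nonempty

/-- `k`-relevance of `α`, `β` w.r.t. the belief sequence `σ`:
there is a chain `χ_1, …, χ_k` of formulas of `σ` with
`α, χ₁` directly relevant, each `χ_i, χ_{i+1}` directly relevant,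
and `χ_k, β` directly relevant (for `k = 0` this is direct relevance). -/
def KRel (k : ℕ) (α β : PropForm ν) (σ : List (PropForm ν)) : Prop :=
  ∃ l : List (PropForm ν), l.length = k ∧ (∀ χ ∈ l, χ ∈ σ) ∧
    List.Chain' DirectRel (α :: (l ++ [β]))

/-- `rel(α,β,σ)` : the least `k` such that `α, β` are `k`-relevant w.r.t. `σ`
(`∞ = ⊤` if they are irrelevant). -/
noncomputable def relDeg (α β : PropForm ν) (σ : List (PropForm ν)) : ℕ∞ :=
  sInf {n : ℕ∞ | ∃ k : ℕ, n = (k : ℕ∞) ∧ KRel k α β σ}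

open Classical in
/-- The priority ordering imposed by the query `γ` on the (indexed) entries of `σ`:
more relevant first; among equally relevant entries, more recent
(larger index) first. -/
noncomputable def priority (γ : PropForm ν) (σ : List (PropForm ν)) :
    (ℕ × PropForm ν) → (ℕ × PropForm ν) → Bool :=
  fun a b =>
    decide (relDeg γ a.2 σ < relDeg γ b.2 σ ∨
      (relDeg γ a.2 σ = relDeg γ b.2 σ ∧ b.1 ≤ a.1))

/-- The entries `δ_1, …, δ_n` of `σ` reordered by the priority above. -/
noncomputable def prioritized (γ : PropForm ν) (σ : List (PropForm ν)) :
    List (PropForm ν) :=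
  (((List.range σ.length).zip σ).mergeSort (priority γ σ)).map Prod.snd

open Classical in
/-- The prioritized maxiconsistent set `Γ_{⟨σ,k,γ⟩}` : go through `δ_1, …, δ_n`
in priority order, skipping `δ_{i+1}` if `Γ^i ⊢ ¬δ_{i+1}` or `δ_{i+1}` is not
`k`-relevant to `γ` w.r.t. `σ`, and adding it otherwise. -/
noncomputable def Gamma (σ : List (PropForm ν)) (k : ℕ) (γ : PropForm ν) :
    Set (PropForm ν) :=
  (prioritized γ σ).foldl
    (fun Γ δ =>
      if Entails Γ (PropForm.neg δ) ∨ (k : ℕ∞) < relDeg γ δ σ then Γ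
      else insert δ Γ) ∅

/-- `σ ⊢_k γ` iff `Γ_{⟨σ,k,γ⟩} ⊢ γ`. -/
def InferK (σ : List (PropForm ν)) (k : ℕ) (γ : PropForm ν) : Prop :=
  Entails (Gamma σ k γ) γ

/-- `C_k(σ) = {γ | σ ⊢_k γ}`. -/
def Ck (σ : List (PropForm ν)) (k : ℕ) : Set (PropForm ν) :=
  {γ | InferK σ k γ}

/-- Revision `σ * γ` : concatenation of `γ` at the (most recent) end of `σ`. -/
def revise (σ : List (PropForm ν)) (γ : PropForm ν) : List (PropForm ν) :=
  σ ++ [γ]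


open Classical

/-- List of variables occurring in a formula. -/
def varsList : PropForm ν → List ν
  | .var x => [x]
  | .tru => []
  | .fls => []
  | .neg φ => varsList φ
  | .conj φ ψ => varsList φ ++ varsList ψ
  | .disj φ ψ => varsList φ ++ varsList ψ
  | .impl φ ψ => varsList φ ++ varsList ψ
  | .biim φ ψ => varsList φ ++ varsList ψ

lemma eval_agree (α : PropForm ν) (v w : ν → Bool)
    (h : ∀ x ∈ varsList α, v x = w x) : α.eval v = α.eval w := by
  induction α with
  | var x => exact h x (by simp [varsList])
  | tru => rfl
  | fls => rfl
  | neg φ ih =>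
      simp only [PropForm.eval]; rw [ih (fun x hx => h x hx)]
  | conj φ ψ ih1 ih2 =>
      simp only [PropForm.eval]
      rw [ih1 (fun x hx => h x (by simp [varsList, hx])),
        ih2 (fun x hx => h x (by simp [varsList, hx]))]
  | disj φ ψ ih1 ih2 =>
      simp only [PropForm.eval]
      rw [ih1 (fun x hx => h x (by simp [varsList, hx])),
        ih2 (fun x hx => h x (by simp [varsList, hx]))]
  | impl φ ψ ih1 ih2 =>
      simp only [PropForm.eval]
      rw [ih1 (fun x hx => h x (by simp [varsList, hx])),
        ih2 (fun x hx => h x (by simp [varsList, hx]))]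
  | biim φ ψ ih1 ih2 =>
      simp only [PropForm.eval]
      rw [ih1 (fun x hx => h x (by simp [varsList, hx])),
        ih2 (fun x hx => h x (by simp [varsList, hx]))]

/-- The set of variables `α` semantically depends on. -/
def Dep (α : PropForm ν) : Set ν :=
  {x | ∃ v b, α.eval (Function.update v x b) ≠ α.eval v}

lemma eval_update_of_not_dep {α : PropForm ν} {x : ν} (h : x ∉ Dep α)
    (v : ν → Bool) (b : Bool) :
    α.eval (Function.update v x b) = α.eval v := by
  by_contra hne
  exact h ⟨v, b, hne⟩

lemma eval_agree_off {α : PropForm ν} :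
    ∀ l : List ν, (∀ x ∈ l, x ∉ Dep α) →
      ∀ v w : ν → Bool, (∀ x, x ∉ l → v x = w x) → α.eval v = α.eval w := by
  intro l
  induction l with
  | nil =>
      intro _ v w h
      have : v = w := funext fun x => h x (by simp)
      rw [this]
  | cons y l ih =>
      intro hdep v w h
      have h1 : α.eval v = α.eval (Function.update v y (w y)) :=
        (eval_update_of_not_dep (hdep y (by simp)) v (w y)).symm
      rw [h1]
      refine ih (fun x hx => hdep x (by simp [hx])) _ _ ?_
      intro x hx
      by_cases hxy : x = y
      · subst hxy; simp
      · rw [Function.update_of_ne hxy]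
        exact h x (by simp [hx, hxy])

lemma eval_agree_on_dep {α : PropForm ν} {v w : ν → Bool}
    (h : ∀ x ∈ Dep α, v x = w x) : α.eval v = α.eval w := by
  set w' : ν → Bool := fun x => if x ∈ varsList α then w x else v x with hw'
  have h2 : α.eval w' = α.eval w := eval_agree _ _ _ (fun x hx => by simp [hw', hx])
  rw [← h2]
  refine eval_agree_off ((varsList α).filter fun x => decide (x ∉ Dep α)) ?_ v w' ?_
  · intro x hx
    simp only [List.mem_filter, decide_eq_true_eq] at hx
    exact hx.2
  · intro x hx
    simp only [List.mem_filter, decide_eq_true_eq, not_and, not_not] at hx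
    by_cases hv : x ∈ varsList α
    · have := h x (hx hv)
      simp [hw', hv, this]
    · simp [hw', hv]

/-- Replace variables not satisfying `p` by the constant `false`. -/
noncomputable def restrictTo (p : Set ν) : PropForm ν → PropForm ν
  | .var x => if x ∈ p then .var x else .fls
  | .tru => .tru
  | .fls => .fls
  | .neg φ => .neg (restrictTo p φ)
  | .conj φ ψ => .conj (restrictTo p φ) (restrictTo p ψ)
  | .disj φ ψ => .disj (restrictTo p φ) (restrictTo p ψ)
  | .impl φ ψ => .impl (restrictTo p φ) (restrictTo p ψ)
  | .biim φ ψ => .biim (restrictTo p φ) (restrictTo p ψ)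

lemma eval_restrictTo (p : Set ν) (α : PropForm ν) (v : ν → Bool) :
    (restrictTo p α).eval v = α.eval (fun x => if x ∈ p then v x else false) := by
  induction α with
  | var x => by_cases h : x ∈ p <;> simp [restrictTo, PropForm.eval, h]
  | tru => rfl
  | fls => rfl
  | neg φ ih => simp [restrictTo, PropForm.eval, ih]
  | conj φ ψ ih1 ih2 => simp [restrictTo, PropForm.eval, ih1, ih2]
  | disj φ ψ ih1 ih2 => simp [restrictTo, PropForm.eval, ih1, ih2]
  | impl φ ψ ih1 ih2 => simp [restrictTo, PropForm.eval, ih1, ih2]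
  | biim φ ψ ih1 ih2 => simp [restrictTo, PropForm.eval, ih1, ih2]

lemma vars_restrictTo (p : Set ν) (α : PropForm ν) :
    (restrictTo p α).vars ⊆ p := by
  induction α with
  | var x =>
      by_cases h : x ∈ p
      · simp only [restrictTo, if_pos h, PropForm.vars]
        intro y hy; simp at hy; subst hy; exact h
      · simp [restrictTo, if_neg h, PropForm.vars]
  | tru => simp [restrictTo, PropForm.vars]
  | fls => simp [restrictTo, PropForm.vars]
  | neg φ ih => simpa [restrictTo, PropForm.vars] using ih
  | conj φ ψ ih1 ih2 =>
      simp only [restrictTo, PropForm.vars]; exact Set.union_subset ih1 ih2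
  | disj φ ψ ih1 ih2 =>
      simp only [restrictTo, PropForm.vars]; exact Set.union_subset ih1 ih2
  | impl φ ψ ih1 ih2 =>
      simp only [restrictTo, PropForm.vars]; exact Set.union_subset ih1 ih2
  | biim φ ψ ih1 ih2 =>
      simp only [restrictTo, PropForm.vars]; exact Set.union_subset ih1 ih2

lemma expresses_dep (α : PropForm ν) : Expresses (Dep α) α := by
  refine ⟨restrictTo (Dep α) α, ?_, vars_restrictTo _ _⟩
  intro v
  rw [eval_restrictTo]
  exact eval_agree_on_dep (fun x hx => by simp [hx])

/-- `vars` of `β` controls `eval` of `β`. -/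
lemma eval_agree_vars (β : PropForm ν) (v w : ν → Bool)
    (h : ∀ x ∈ β.vars, v x = w x) : β.eval v = β.eval w := by
  induction β with
  | var x => exact h x (by simp [PropForm.vars])
  | tru => rfl
  | fls => rfl
  | neg φ ih => simp only [PropForm.eval]; rw [ih h]
  | conj φ ψ ih1 ih2 =>
      simp only [PropForm.eval]
      rw [ih1 (fun x hx => h x (Or.inl hx)), ih2 (fun x hx => h x (Or.inr hx))]
  | disj φ ψ ih1 ih2 =>
      simp only [PropForm.eval]
      rw [ih1 (fun x hx => h x (Or.inl hx)), ih2 (fun x hx => h x (Or.inr hx))]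
  | impl φ ψ ih1 ih2 =>
      simp only [PropForm.eval]
      rw [ih1 (fun x hx => h x (Or.inl hx)), ih2 (fun x hx => h x (Or.inr hx))]
  | biim φ ψ ih1 ih2 =>
      simp only [PropForm.eval]
      rw [ih1 (fun x hx => h x (Or.inl hx)), ih2 (fun x hx => h x (Or.inr hx))]

lemma dep_subset_of_expresses {α : PropForm ν} {W : Set ν}
    (h : Expresses W α) : Dep α ⊆ W := by
  obtain ⟨β, hβeq, hβW⟩ := h
  intro x hx
  by_contra hxW
  obtain ⟨v, b, hne⟩ := hx
  apply hne
  rw [hβeq, hβeq]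
  refine eval_agree_vars β _ _ ?_
  intro y hy
  have hyx : y ≠ x := fun h => hxW (h ▸ hβW hy)
  exact Function.update_of_ne hyx _ _

/-- For every formula α, the collection of sets of variables
expressing α has a least element w.r.t. inclusion (the smallest language of α);
equivalently, the collection is closed under binary intersection. -/
theorem smallest_language_exists {ν : Type} (α : PropForm ν) :
    (∃ V : Set ν, Expresses V α ∧ ∀ W : Set ν, Expresses W α → V ⊆ W) ∧
    (∀ V₁ V₂ : Set ν, Expresses V₁ α → Expresses V₂ α →
      Expresses (V₁ ∩ V₂) α) := by
  constructor
  · exact ⟨Dep α, expresses_dep α, fun W hW => dep_subset_of_expresses hW⟩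
  · intro V₁ V₂ h1 h2
    obtain ⟨β, hβeq, hβ⟩ := expresses_dep α
    exact ⟨β, hβeq, hβ.trans (Set.subset_inter
      (dep_subset_of_expresses h1) (dep_subset_of_expresses h2))⟩

end BeliefSeq
end

section
/- The relation R_l satisfies neither Epstein's condition R2 nor R5: (i) there exist propositional formulas α, β, γ such that R_l(α, β→γ) holds but R_l(α, β∧γ) fails (e.g., α = β = p and γ = ¬p, where β∧γ is a contradiction with empty smallest language while β→γ is equivalent to ¬p); (ii) there exist formulas α, β, γ such that R_l(α,β) holds but R_l(α, β→γ) fails (e.g., α = β = γ = p, where β→γ is a tautology with empty smallest language). -/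
namespace BeliefSeq

variable {ν : Type}

/-- Evaluation depends only on the variables occurring in the formula. -/
theorem eval_congr {v w : ν → Bool} :
    ∀ φ : PropForm ν, (∀ x ∈ φ.vars, v x = w x) → φ.eval v = φ.eval w
  | PropForm.var x, h => h x (by simp [PropForm.vars])
  | PropForm.tru, _ => rfl
  | PropForm.fls, _ => rfl
  | PropForm.neg φ, h => by
      simp [PropForm.eval, eval_congr φ h]
  | PropForm.conj φ ψ, h => by
      simp [PropForm.eval,
        eval_congr φ (fun x hx => h x (Or.inl hx)),
        eval_congr ψ (fun x hx => h x (Or.inr hx))]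
  | PropForm.disj φ ψ, h => by
      simp [PropForm.eval,
        eval_congr φ (fun x hx => h x (Or.inl hx)),
        eval_congr ψ (fun x hx => h x (Or.inr hx))]
  | PropForm.impl φ ψ, h => by
      simp [PropForm.eval,
        eval_congr φ (fun x hx => h x (Or.inl hx)),
        eval_congr ψ (fun x hx => h x (Or.inr hx))]
  | PropForm.biim φ ψ, h => by
      simp [PropForm.eval,
        eval_congr φ (fun x hx => h x (Or.inl hx)),
        eval_congr ψ (fun x hx => h x (Or.inr hx))]

/-- If `α` semantically depends on variable `n`, then `n ∈ Lang α`. -/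
theorem mem_Lang_of_depends {α : PropForm ν} {n : ν} {v w : ν → Bool}
    (hagree : ∀ m, m ≠ n → v m = w m) (hne : α.eval v ≠ α.eval w) :
    n ∈ Lang α := by
  intro V hV
  obtain ⟨β, hβ, hsub⟩ := hV
  by_contra hn
  apply hne
  rw [hβ v, hβ w]
  exact eval_congr β (fun x hx => hagree x (fun h => hn (h ▸ hsub hx)))

/-- If `α` is expressible without variables, then `Lang α = ∅`. -/
theorem Lang_empty_of_expresses_empty {α : PropForm ν}
    (h : Expresses (∅ : Set ν) α) : Lang α = ∅ := by
  apply Set.eq_empty_of_subset_empty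
  exact Set.sInter_subset_of_mem h

/-- `R_l` satisfies neither Epstein's R2 nor R5:
(i) there are α, β, γ with `R_l(α, β→γ)` but not `R_l(α, β∧γ)`;
(ii) there are α, β, γ with `R_l(α,β)` but not `R_l(α, β→γ)`. -/
theorem Rl_fails_R2_and_R5 :
    (∃ α β γ : PropForm ℕ,
      DirectRel α (PropForm.impl β γ) ∧ ¬ DirectRel α (PropForm.conj β γ)) ∧
    (∃ α β γ : PropForm ℕ,
      DirectRel α β ∧ ¬ DirectRel α (PropForm.impl β γ)) := by
  have hdep : ∀ α : PropForm ℕ,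
      (∀ v : ℕ → Bool, α.eval v = !v 0) → (0 : ℕ) ∈ Lang α := by
    intro α h
    refine mem_Lang_of_depends (v := fun _ => true)
      (w := fun m => if m = 0 then false else true) (n := 0) ?_ ?_
    · intro m hm; simp [hm]
    · simp [h]
  have hp : (0 : ℕ) ∈ Lang (PropForm.var 0 : PropForm ℕ) := by
    refine mem_Lang_of_depends (v := fun _ => true)
      (w := fun m => if m = 0 then false else true) (n := 0) ?_ ?_
    · intro m hm; simp [hm]
    · simp [PropForm.eval]
  constructor
  · refine ⟨PropForm.var 0, PropForm.var 0, PropForm.neg (PropForm.var 0), ?_, ?_⟩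
    · exact ⟨0, hp, hdep _ (fun v => by cases h : v 0 <;> simp [PropForm.eval, h])⟩
    · have hcontr : Lang (PropForm.conj (PropForm.var 0)
          (PropForm.neg (PropForm.var 0)) : PropForm ℕ) = ∅ := by
        apply Lang_empty_of_expresses_empty
        exact ⟨PropForm.fls, fun v => by cases h : v 0 <;> simp [PropForm.eval, h],
          by simp [PropForm.vars]⟩
      simp [DirectRel, hcontr]
  · refine ⟨PropForm.var 0, PropForm.var 0, PropForm.var 0, ⟨0, hp, hp⟩, ?_⟩
    have htaut : Lang (PropForm.impl (PropForm.var 0)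
        (PropForm.var 0) : PropForm ℕ) = ∅ := by
      apply Lang_empty_of_expresses_empty
      exact ⟨PropForm.tru, fun v => by cases h : v 0 <;> simp [PropForm.eval, h],
        by simp [PropForm.vars]⟩
    simp [DirectRel, htaut]

end BeliefSeq
end
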